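/- Let f : ℝ → ℝ be defined on an interval (-ρ, ρ) with ρ > 0, let n be a positive integer, and suppose f^(n)(0) exists. Then (D_0^n f)(0) = f^(n)(0)/n!, where D_0 is the q-derivative operator with q = 0. -/

import Mathlib

open Filter Finset

/-- The `q`-derivative operator: `D_q f x = (f x - f (q x)) / ((1-q) x)` for `x ≠ 0`,
and `D_q f 0 = f'(0)`.  For `q = 0` this gives `D_0 f x = (f x - f 0)/x` for `x ≠ 0`. -/
noncomputable def qDeriv (q : ℝ) (f : ℝ → ℝ) : ℝ → ℝ :=
  fun x => if x = 0 then deriv f 0 else (f x - f (q * x)) / ((1 - q) * x)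

/-- Algebraic formula for the iterated `D_0` away from `0`. -/
lemma qDeriv_iterate_apply_ne_zero (f : ℝ → ℝ) (m : ℕ) (x : ℝ) (hx : x ≠ 0) :
    ((qDeriv 0)^[m] f) x
      = (f x - ∑ k ∈ range m, ((qDeriv 0)^[k] f 0) * x ^ k) / x ^ m := by
  induction m with
  | zero => simp
  | succ m ih =>
    rw [Function.iterate_succ_apply']
    have h0 : ((qDeriv 0)^[m] f) 0 = ((qDeriv 0)^[m] f) 0 := rfl
    simp only [qDeriv, if_neg hx, zero_mul, sub_zero, one_mul]
    rw [ih, Finset.sum_range_succ]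
    · field_simp
      ring

/-- Key analytic lemma: Taylor-type limit, proved by induction and L'Hôpital. -/
lemma taylor_limit (m : ℕ) (hm : 1 ≤ m) : ∀ f : ℝ → ℝ,
    (∀ k, k + 1 < m → ∀ᶠ x in nhds (0 : ℝ), DifferentiableAt ℝ (iteratedDeriv k f) x) →
    DifferentiableAt ℝ (iteratedDeriv (m - 1) f) 0 →
    Tendsto (fun x => (f x - ∑ k ∈ range m, iteratedDeriv k f 0 / k.factorial * x ^ k) / x ^ m)
      (nhdsWithin (0 : ℝ) {(0:ℝ)}ᶜ) (nhds (iteratedDeriv m f 0 / m.factorial)) := by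
  induction m, hm using Nat.le_induction with
  | base =>
    intro f _ hf'
    have hf0 : DifferentiableAt ℝ f 0 := by simpa using hf'
    have h := hasDerivAt_iff_tendsto_slope.mp hf0.hasDerivAt
    have heq : ∀ x : ℝ, x ≠ 0 →
        slope f 0 x = (f x - ∑ k ∈ range 1, iteratedDeriv k f 0 / k.factorial * x ^ k) / x ^ 1 := by
      intro x hx
      rw [slope_def_field]
      simp [iteratedDeriv_zero]
    have : Tendsto (fun x => (f x - ∑ k ∈ range 1, iteratedDeriv k f 0 / k.factorial * x ^ k) / x ^ 1)
        (nhdsWithin (0 : ℝ) {(0:ℝ)}ᶜ) (nhds (deriv f 0)) := by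
      refine h.congr' ?_
      filter_upwards [self_mem_nhdsWithin] with x hx
      exact heq x hx
    simpa [iteratedDeriv_one] using this
  | succ m hm1 ih =>
    intro f hf hf'
    -- notation
    set g : ℝ → ℝ := deriv f with hg
    have hit : ∀ k, iteratedDeriv (k + 1) f = iteratedDeriv k g := fun k => iteratedDeriv_succ' ..
    -- IH applied to g = deriv f
    have ihg : Tendsto (fun x => (g x - ∑ k ∈ range m, iteratedDeriv k g 0 / k.factorial * x ^ k) / x ^ m)
        (nhdsWithin (0 : ℝ) {(0:ℝ)}ᶜ) (nhds (iteratedDeriv m g 0 / m.factorial)) := by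
      refine ih g ?_ ?_
      · intro k hk
        have := hf (k + 1) (by omega)
        rwa [hit k] at this
      · have : m - 1 + 1 = m := by omega
        have h2 := hf'
        rw [show m + 1 - 1 = m from rfl, ← this, hit (m - 1)] at h2
        exact h2
    -- f is differentiable near 0
    have hfd : ∀ᶠ x in nhds (0 : ℝ), DifferentiableAt ℝ f x := by
      have := hf 0 (by omega)
      simpa [iteratedDeriv_zero] using this
    set F : ℝ → ℝ := fun x => f x - ∑ k ∈ range (m + 1), iteratedDeriv k f 0 / k.factorial * x ^ k
      with hF
    set F' : ℝ → ℝ := fun x => g x - ∑ k ∈ range m, iteratedDeriv k g 0 / k.factorial * x ^ k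
      with hF'
    have hderiv : ∀ᶠ x in nhds (0 : ℝ), HasDerivAt F (F' x) x := by
      filter_upwards [hfd] with x hx
      have hpoly : HasDerivAt (fun y : ℝ => ∑ k ∈ range (m + 1), iteratedDeriv k f 0 / k.factorial * y ^ k)
          (∑ k ∈ range (m + 1), iteratedDeriv k f 0 / k.factorial * (k * x ^ (k - 1))) x := by
        apply HasDerivAt.fun_sum
        intro k _
        exact (hasDerivAt_pow k x).const_mul _
      have hsum : (∑ k ∈ range (m + 1), iteratedDeriv k f 0 / k.factorial * (k * x ^ (k - 1)))
          = ∑ k ∈ range m, iteratedDeriv k g 0 / k.factorial * x ^ k := by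
        rw [Finset.sum_range_succ']
        simp only [Nat.cast_zero, zero_mul, mul_zero, add_zero]
        refine Finset.sum_congr rfl fun k _ => ?_
        rw [← hit k]
        have : (k + 1).factorial = (k + 1) * k.factorial := Nat.factorial_succ k
        rw [this]
        push_cast
        have hk0 : (k.factorial : ℝ) ≠ 0 := Nat.cast_ne_zero.mpr k.factorial_ne_zero
        field_simp
      have := (hx.hasDerivAt.sub hpoly)
      rwa [hsum] at this
    have hF0 : Tendsto F (nhdsWithin (0 : ℝ) {(0:ℝ)}ᶜ) (nhds 0) := by
      have hc : ContinuousAt F 0 := by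
        apply ContinuousAt.sub
        · exact (hfd.self_of_nhds).continuousAt
        · exact (continuous_finset_sum _ fun k _ => continuous_const.mul (continuous_pow k)).continuousAt
      have hF00 : F 0 = 0 := by
        simp only [hF, Finset.sum_range_succ']
        simp [iteratedDeriv_zero, zero_pow]
      have := hc.tendsto
      rw [hF00] at this
      exact this.mono_left nhdsWithin_le_nhds
    have hdiv : Tendsto (fun x => F' x / ((m + 1 : ℝ) * x ^ m))
        (nhdsWithin (0 : ℝ) {(0:ℝ)}ᶜ) (nhds (iteratedDeriv (m + 1) f 0 / (m + 1).factorial)) := by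
      have h1 := ihg.div_const ((m : ℝ) + 1)
      have heq : (fun x => (g x - ∑ k ∈ range m, iteratedDeriv k g 0 / k.factorial * x ^ k) / x ^ m / ((m : ℝ) + 1))
          =ᶠ[nhdsWithin (0 : ℝ) {(0:ℝ)}ᶜ] fun x => F' x / ((m + 1 : ℝ) * x ^ m) := by
        filter_upwards [self_mem_nhdsWithin] with x hx
        have hx0 : x ≠ 0 := hx
        rw [div_div, mul_comm]
      have hval : iteratedDeriv m g 0 / m.factorial / ((m : ℝ) + 1)
          = iteratedDeriv (m + 1) f 0 / (m + 1).factorial := by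
        rw [← hit m, Nat.factorial_succ]
        push_cast
        rw [div_div, mul_comm]
      rw [hval] at h1
      exact h1.congr' heq
    have hlh := HasDerivAt.lhopital_zero_nhdsNE
      (f := F) (f' := F') (g := fun x : ℝ => x ^ (m + 1)) (g' := fun x => (m + 1 : ℝ) * x ^ m)
      (eventually_nhdsWithin_of_eventually_nhds hderiv)
      (Eventually.of_forall fun x => by simpa using hasDerivAt_pow (m + 1) x)
      (by
        filter_upwards [self_mem_nhdsWithin] with x hx
        have hx0 : x ≠ 0 := hx
        positivity)
      hF0
      (by
        have : Tendsto (fun x : ℝ => x ^ (m + 1)) (nhds 0) (nhds 0) := by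
          have := (continuous_pow (m + 1)).tendsto (0 : ℝ)
          simpa using this
        exact this.mono_left nhdsWithin_le_nhds)
      hdiv
    exact hlh

/-- If `f^{(n)}(0)` exists, then `(D_0^n f)(0) = f^{(n)}(0)/n!`. -/
theorem qDeriv_zero_iterate_apply_zero (f : ℝ → ℝ) (n : ℕ) (hn : 0 < n)
    (hf : ∀ k < n - 1, ∀ᶠ x in nhds (0 : ℝ), DifferentiableAt ℝ (iteratedDeriv k f) x)
    (hf' : DifferentiableAt ℝ (iteratedDeriv (n - 1) f) 0) :
    ((qDeriv 0)^[n] f) 0 = iteratedDeriv n f 0 / n.factorial := by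
  set a : ℕ → ℝ := fun k => ((qDeriv 0)^[k] f) 0 with ha
  set c : ℕ → ℝ := fun k => iteratedDeriv k f 0 / k.factorial with hc
  have key : ∀ m, m ≤ n → ∀ k ≤ m, a k = c k := by
    intro m
    induction m with
    | zero =>
      intro _ k hk
      interval_cases k
      simp [ha, hc, iteratedDeriv_zero]
    | succ m ihm =>
      intro hmn k hk
      rcases Nat.lt_succ_iff_lt_or_eq.mp (Nat.lt_succ_of_le hk) with h | h
      · exact ihm (by omega) k (by omega)
      · subst h
        -- show a (m+1) = c (m+1)
        have htay : Tendsto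
            (fun x => (f x - ∑ k ∈ range (m + 1), c k * x ^ k) / x ^ (m + 1))
            (nhdsWithin (0 : ℝ) {(0:ℝ)}ᶜ) (nhds (c (m + 1))) := by
          apply taylor_limit (m + 1) (by omega) f
          · intro k hkm
            exact hf k (by omega)
          · rcases eq_or_lt_of_le hmn with h | h
            · have : m + 1 - 1 = n - 1 := by omega
              rwa [this]
            · have := hf m (by omega)
              simpa using this.self_of_nhds
        have hslope : Tendsto (slope ((qDeriv 0)^[m] f) 0)
            (nhdsWithin (0 : ℝ) {(0:ℝ)}ᶜ) (nhds (c (m + 1))) := by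
          refine htay.congr' ?_
          filter_upwards [self_mem_nhdsWithin] with x hx
          have hx0 : x ≠ 0 := hx
          rw [slope_def_field, qDeriv_iterate_apply_ne_zero f m x hx0]
          have hsum : ∀ k ∈ range m, ((qDeriv 0)^[k] f) 0 * x ^ k = c k * x ^ k := by
            intro k hkr
            have hkm : k ≤ m := le_of_lt (Finset.mem_range.mp hkr)
            rw [show ((qDeriv 0)^[k] f) 0 = a k from rfl, ihm (by omega) k hkm]
          rw [Finset.sum_congr rfl hsum, Finset.sum_range_succ,
            show ((qDeriv 0)^[m] f) 0 = a m from rfl, ihm (by omega) m le_rfl]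
          have hxm : (x : ℝ) ^ m ≠ 0 := pow_ne_zero m hx0
          field_simp
          ring
        have hHD : HasDerivAt ((qDeriv 0)^[m] f) (c (m + 1)) 0 :=
          hasDerivAt_iff_tendsto_slope.mpr hslope
        have : a (m + 1) = deriv ((qDeriv 0)^[m] f) 0 := by
          simp [ha, Function.iterate_succ_apply', qDeriv]
        rw [this, hHD.deriv]
  exact key n le_rfl n le_rfl
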